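/- For r < 0, the function g(k) = (1+r)k² − 2k⁴ + k⁶ on k ≥ 0 attains its minimum value −1/τ* at k² = 2/3 + (1/3)√α, where α = 1 − 3r and τ* = 27 / (2(√α − 1)(√α + 2)²); consequently 1 + τ·g(k) = 0 has a solution k ≥ 0 if and only if τ ≥ τ*. -/

import Mathlib

theorem stmt_5 (r : ℝ) (hr : r < 0) :
    let g : ℝ → ℝ := fun k => (1 + r) * k ^ 2 - 2 * k ^ 4 + k ^ 6
    let α : ℝ := 1 - 3 * r
    let τs : ℝ := 27 / (2 * (Real.sqrt α - 1) * (Real.sqrt α + 2) ^ 2)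
    let k0 : ℝ := Real.sqrt (2 / 3 + Real.sqrt α / 3)
    (∀ k : ℝ, 0 ≤ k → -(1 / τs) ≤ g k) ∧
    k0 ^ 2 = 2 / 3 + Real.sqrt α / 3 ∧ g k0 = -(1 / τs) ∧
    (∀ τ : ℝ, 0 < τ → ((∃ k : ℝ, 0 ≤ k ∧ 1 + τ * g k = 0) ↔ τs ≤ τ)) := by
  intro g α τs k0
  have hα : (1:ℝ) < α := by simp only [α]; linarith
  set s := Real.sqrt α with hs
  have hs1 : 1 < s := by
    have : Real.sqrt 1 < Real.sqrt α := Real.sqrt_lt_sqrt (by norm_num) hα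
    simpa using this
  have hssq : s ^ 2 = 1 - 3 * r := by
    rw [hs, Real.sq_sqrt (by simp only [α]; linarith : (0:ℝ) ≤ α)]
  set D : ℝ := 2 * (s - 1) * (s + 2) ^ 2 with hDdef
  have hD : 0 < D := by
    have h1 : 0 < s - 1 := by linarith
    have h2 : 0 < (s + 2) ^ 2 := by positivity
    positivity
  have hτs : τs = 27 / D := rfl
  have hτspos : 0 < τs := by rw [hτs]; positivity
  have hinv : 1 / τs = D / 27 := by rw [hτs, one_div_div]
  -- key identity
  have key : ∀ k : ℝ, 27 * g k + D = (3 * k ^ 2 - 2 - s) ^ 2 * (3 * k ^ 2 + 2 * s - 2) := by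
    intro k
    simp only [g, hDdef]
    linear_combination (9 * k ^ 2) * hssq
  have hlb : ∀ k : ℝ, 0 ≤ k → -(1 / τs) ≤ g k := by
    intro k _
    have h1 : 0 ≤ (3 * k ^ 2 - 2 - s) ^ 2 * (3 * k ^ 2 + 2 * s - 2) := by
      apply mul_nonneg (sq_nonneg _)
      nlinarith [sq_nonneg k]
    have h2 : (0:ℝ) ≤ 27 * g k + D := by rw [key k]; exact h1
    rw [hinv]
    nlinarith [h2]
  -- k0
  have hx0 : (0:ℝ) ≤ 2 / 3 + s / 3 := by linarith
  have hk0sq : k0 ^ 2 = 2 / 3 + s / 3 := Real.sq_sqrt hx0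
  have hk0 : 0 ≤ k0 := Real.sqrt_nonneg _
  have hgk0 : g k0 = -(1 / τs) := by
    rw [hinv]
    have h4 : k0 ^ 4 = (2 / 3 + s / 3) ^ 2 := by
      rw [show k0 ^ 4 = (k0 ^ 2) ^ 2 by ring, hk0sq]
    have h6 : k0 ^ 6 = (2 / 3 + s / 3) ^ 3 := by
      rw [show k0 ^ 6 = (k0 ^ 2) ^ 3 by ring, hk0sq]
    simp only [g, hDdef]
    rw [hk0sq, h4, h6]
    linear_combination ((2 + s) / 9) * hssq
  refine ⟨hlb, hk0sq, hgk0, ?_⟩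
  intro τ hτ
  constructor
  · rintro ⟨k, hk, hek⟩
    have hgk : g k = -(1 / τ) := by field_simp at hek ⊢; linarith
    have h1 : -(1 / τs) ≤ -(1 / τ) := hgk ▸ hlb k hk
    have h2 : 1 / τ ≤ 1 / τs := by linarith
    calc τs = 1 / (1 / τs) := (one_div_one_div τs).symm
      _ ≤ 1 / (1 / τ) := one_div_le_one_div_of_le (by positivity) h2
      _ = τ := one_div_one_div τ
  · intro hle
    have hcont : ContinuousOn g (Set.Icc 0 k0) := by
      apply Continuous.continuousOn; simp only [g]; continuity
    have hmem : -(1 / τ) ∈ Set.Icc (g k0) (g 0) := by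
      constructor
      · rw [hgk0]
        have : 1 / τ ≤ 1 / τs := one_div_le_one_div_of_le hτspos hle
        linarith
      · simp only [g]
        have : 0 < 1 / τ := by positivity
        norm_num; linarith
    obtain ⟨k, hkmem, hgk⟩ := intermediate_value_Icc' hk0 hcont hmem
    refine ⟨k, hkmem.1, ?_⟩
    rw [hgk]
    field_simp
    norm_num
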